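/- The optimal value function equals the pointwise infimum over policies of the policy value functions, and the infimum is attained: for every s ∈ S, min_{a} Q⋆(s,a) = ⨅_{π : S → PMF A} V^π(s), and there exists a policy π attaining this infimum simultaneously for all s ∈ S. -/

import Mathlib

open Finset

/-- The policy Bellman operator `T^π` on action-value functions for a finite
discounted MDP: `(T^π Q)(s,a) = l(s,a) + γ ∑_{s'} P(s'|s,a) ∑_{a'} π(a'|s') Q(s',a')`. -/
noncomputable def Tpol {S A : Type*} [Fintype S] [Fintype A]
    (P : S → A → PMF S) (l : S → A → ℝ) (γ : ℝ) (π : S → PMF A)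
    (Q : S × A → ℝ) : S × A → ℝ :=
  fun sa => l sa.1 sa.2 +
    γ * ∑ s' : S, (P sa.1 sa.2 s').toReal * ∑ a' : A, (π s' a').toReal * Q (s', a')

/-- The Bellman optimality operator `T` on action-value functions for a finite
discounted MDP: `(T Q)(s,a) = l(s,a) + γ ∑_{s'} P(s'|s,a) · min_{a'} Q(s',a')`. -/
noncomputable def Topt {S A : Type*} [Fintype S] [Fintype A] [Nonempty A]
    (P : S → A → PMF S) (l : S → A → ℝ) (γ : ℝ) (Q : S × A → ℝ) : S × A → ℝ :=
  fun sa => l sa.1 sa.2 +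
    γ * ∑ s' : S, (P sa.1 sa.2 s').toReal *
      (univ.inf' univ_nonempty fun a' => Q (s', a'))

/-- The state-value function `V^π(s) = ∑_a π(a|s) Q(s,a)` induced by a policy `π`
and an action-value function `Q`. -/
noncomputable def Vof {S A : Type*} [Fintype A] (π : S → PMF A) (Q : S × A → ℝ)
    (s : S) : ℝ :=
  ∑ a : A, (π s a).toReal * Q (s, a)

lemma pmf_sum_toReal {α : Type*} [Fintype α] (p : PMF α) :
    ∑ a : α, (p a).toReal = 1 := by
  have h : ∑ a : α, p a = 1 := by rw [← tsum_fintype (L := .unconditional _)]; exact p.tsum_coe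
  rw [← ENNReal.toReal_sum (fun a _ => PMF.apply_ne_top p a), h, ENNReal.toReal_one]

lemma le_zero_of_contr {S A : Type*} [Fintype S] [Fintype A] [Nonempty S] [Nonempty A]
    (P : S → A → PMF S) (π : S → PMF A) (γ : ℝ) (hγ0 : 0 ≤ γ) (hγ1 : γ < 1)
    (g : S × A → ℝ)
    (h : ∀ sa : S × A, g sa ≤ γ * ∑ s' : S, (P sa.1 sa.2 s').toReal *
        ∑ a' : A, (π s' a').toReal * g (s', a')) :
    ∀ sa, g sa ≤ 0 := by
  have hne : (univ : Finset (S × A)).Nonempty := univ_nonempty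
  set D := univ.sup' hne g with hD
  have hle : ∀ sa : S × A, g sa ≤ D := fun sa => le_sup' g (mem_univ sa)
  obtain ⟨sa₀, -, hsa₀⟩ := exists_mem_eq_sup' hne g
  have hDγ : D ≤ γ * D := by
    calc D = g sa₀ := hsa₀
    _ ≤ γ * ∑ s', (P sa₀.1 sa₀.2 s').toReal * ∑ a', (π s' a').toReal * g (s', a') := h sa₀
    _ ≤ γ * ∑ s', (P sa₀.1 sa₀.2 s').toReal * ∑ a', (π s' a').toReal * D := by
        apply mul_le_mul_of_nonneg_left _ hγ0
        apply Finset.sum_le_sum; intro s' _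
        apply mul_le_mul_of_nonneg_left _ ENNReal.toReal_nonneg
        apply Finset.sum_le_sum; intro a' _
        exact mul_le_mul_of_nonneg_left (hle (s', a')) ENNReal.toReal_nonneg
    _ = γ * D := by
        congr 1
        have e : ∀ s' : S, ∑ a', (π s' a').toReal * D = D := fun s' => by
          rw [← Finset.sum_mul, pmf_sum_toReal, one_mul]
        simp_rw [e]
        rw [← Finset.sum_mul, pmf_sum_toReal, one_mul]
  have hD0 : D ≤ 0 := by nlinarith
  exact fun sa => (hle sa).trans hD0

lemma tpol_fixed_unique {S A : Type*} [Fintype S] [Fintype A] [Nonempty S] [Nonempty A]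
    (P : S → A → PMF S) (l : S → A → ℝ) (γ : ℝ) (hγ0 : 0 ≤ γ) (hγ1 : γ < 1)
    (π : S → PMF A) (Q Q' : S × A → ℝ)
    (hQ : Tpol P l γ π Q = Q) (hQ' : Tpol P l γ π Q' = Q') : Q = Q' := by
  have key : ∀ (R R' : S × A → ℝ), Tpol P l γ π R = R → Tpol P l γ π R' = R' →
      ∀ sa, R sa - R' sa ≤ 0 := by
    intro R R' hR hR'
    apply le_zero_of_contr P π γ hγ0 hγ1
    intro sa
    have e : ∀ s' : S, ∑ a', (π s' a').toReal * (R (s', a') - R' (s', a'))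
        = (∑ a', (π s' a').toReal * R (s', a')) - ∑ a', (π s' a').toReal * R' (s', a') := by
      intro s'
      rw [← Finset.sum_sub_distrib]
      congr 1; funext a'; ring
    have : R sa - R' sa = Tpol P l γ π R sa - Tpol P l γ π R' sa := by rw [hR, hR']
    rw [this]
    simp only [Tpol]
    simp_rw [e, mul_sub, Finset.sum_sub_distrib]
    ring_nf
    exact le_refl _
  have h1 := key Q Q' hQ hQ'
  have h2 := key Q' Q hQ' hQ
  funext sa
  have := h1 sa; have := h2 sa
  linarith

theorem optimal_value_eq_iInf_policy_values
    {S A : Type*} [Fintype S] [Fintype A] [Nonempty S] [Nonempty A]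
    (P : S → A → PMF S) (l : S → A → ℝ) (γ : ℝ) (hγ0 : 0 ≤ γ) (hγ1 : γ < 1)
    (Qstar : S × A → ℝ) (hQstar : Topt P l γ Qstar = Qstar)
    (Qpi : (S → PMF A) → S × A → ℝ)
    (hQpi : ∀ π : S → PMF A, Tpol P l γ π (Qpi π) = Qpi π) :
    (∀ s : S, (univ.inf' univ_nonempty fun a => Qstar (s, a)) =
        ⨅ π : S → PMF A, Vof π (Qpi π) s) ∧
    ∃ π₀ : S → PMF A, ∀ s : S,
      Vof π₀ (Qpi π₀) s = ⨅ π : S → PMF A, Vof π (Qpi π) s := by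
  -- min over a, for weighted averages
  have hminle : ∀ (π : S → PMF A) (Q : S × A → ℝ) (s : S),
      (univ.inf' univ_nonempty fun a => Q (s, a)) ≤ ∑ a, (π s a).toReal * Q (s, a) := by
    intro π Q s
    have : (univ.inf' univ_nonempty fun a => Q (s, a))
        = ∑ a, (π s a).toReal * (univ.inf' univ_nonempty fun a => Q (s, a)) := by
      rw [← Finset.sum_mul, pmf_sum_toReal, one_mul]
    rw [this]
    apply Finset.sum_le_sum; intro a _
    exact mul_le_mul_of_nonneg_left (inf'_le _ (mem_univ a)) ENNReal.toReal_nonneg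
  -- Qstar ≤ Qpi π
  have hstar_le : ∀ (π : S → PMF A) (sa : S × A), Qstar sa ≤ Qpi π sa := by
    intro π
    have h := le_zero_of_contr P π γ hγ0 hγ1 (fun sa => Qstar sa - Qpi π sa) ?_
    · intro sa; linarith [h sa]
    intro sa
    show Qstar sa - Qpi π sa ≤ γ * ∑ s' : S, (P sa.1 sa.2 s').toReal *
        ∑ a' : A, (π s' a').toReal * (Qstar (s', a') - Qpi π (s', a'))
    have e : ∀ s' : S, ∑ a', (π s' a').toReal * (Qstar (s', a') - Qpi π (s', a'))
        = (∑ a', (π s' a').toReal * Qstar (s', a')) - ∑ a', (π s' a').toReal * Qpi π (s', a') := by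
      intro s'
      rw [← Finset.sum_sub_distrib]
      congr 1; funext a'; ring
    have h1 : Qstar sa - Qpi π sa = Topt P l γ Qstar sa - Tpol P l γ π (Qpi π) sa := by
      rw [hQstar, hQpi]
    rw [h1]
    simp only [Topt, Tpol]
    simp_rw [e, mul_sub, Finset.sum_sub_distrib]
    have h2 : ∑ s', (P sa.1 sa.2 s').toReal * (univ.inf' univ_nonempty fun a' => Qstar (s', a'))
        ≤ ∑ s', (P sa.1 sa.2 s').toReal * ∑ a', (π s' a').toReal * Qstar (s', a') := by
      apply Finset.sum_le_sum; intro s' _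
      exact mul_le_mul_of_nonneg_left (hminle π Qstar s') ENNReal.toReal_nonneg
    nlinarith
  -- greedy policy
  obtain ⟨a0, ha0⟩ : ∃ a0 : S → A, ∀ s : S,
      (univ.inf' univ_nonempty fun a => Qstar (s, a)) = Qstar (s, a0 s) := by
    choose a0 hmem hval using fun s => exists_mem_eq_inf' univ_nonempty (fun a => Qstar (s, a))
    exact ⟨a0, hval⟩
  set π₀ : S → PMF A := fun s => PMF.pure (a0 s) with hπ₀
  have hpure : ∀ (s' : S) (Q : S × A → ℝ),
      ∑ a' : A, ((π₀ s') a').toReal * Q (s', a') = Q (s', a0 s') := by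
    intro s' Q
    rw [Finset.sum_eq_single (a0 s')]
    · simp [hπ₀, PMF.pure_apply]
    · intro b _ hb; simp [hπ₀, PMF.pure_apply, hb]
    · simp
  have hfix : Tpol P l γ π₀ Qstar = Qstar := by
    funext sa
    rw [← congrFun hQstar sa]
    simp only [Tpol, Topt]
    congr 1; congr 1
    apply Finset.sum_congr rfl
    intro s' _
    rw [hpure s' Qstar, ← ha0 s']
  have hQpi0 : Qpi π₀ = Qstar :=
    tpol_fixed_unique P l γ hγ0 hγ1 π₀ (Qpi π₀) Qstar (hQpi π₀) hfix
  have hV0 : ∀ s : S, Vof π₀ (Qpi π₀) s = univ.inf' univ_nonempty fun a => Qstar (s, a) := by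
    intro s
    rw [Vof, hQpi0, hpure s Qstar, ha0 s]
  -- lower bound for all policies
  have hlb : ∀ (π : S → PMF A) (s : S),
      (univ.inf' univ_nonempty fun a => Qstar (s, a)) ≤ Vof π (Qpi π) s := by
    intro π s
    refine (hminle π Qstar s).trans ?_
    apply Finset.sum_le_sum; intro a _
    exact mul_le_mul_of_nonneg_left (hstar_le π (s, a)) ENNReal.toReal_nonneg
  have hbdd : ∀ s : S, BddBelow (Set.range fun π : S → PMF A => Vof π (Qpi π) s) := by
    intro s
    refine ⟨univ.inf' univ_nonempty fun a => Qstar (s, a), ?_⟩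
    rintro x ⟨π, rfl⟩
    exact hlb π s
  have hmain : ∀ s : S, (univ.inf' univ_nonempty fun a => Qstar (s, a)) =
      ⨅ π : S → PMF A, Vof π (Qpi π) s := by
    intro s
    apply le_antisymm
    · exact le_ciInf fun π => hlb π s
    · exact (ciInf_le (hbdd s) π₀).trans (hV0 s).le
  exact ⟨hmain, π₀, fun s => by rw [hV0 s, hmain s]⟩
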